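/- (Dichotomy lemma, corollary form) Let R be a box with a partition into vertical strips 𝒮, let F be a set of points with distinct x-coordinates, and let μ ∈ (0,1). For each index x ∈ X(R) let s(x) be the width of the strip containing x. Call an index x safe if for every substrip S of R adjacent to x (i.e., with x_L(S)=x or x_R(S)=x−1), the number of points of F in S incomparable with F(x) is at most μ·|F ∩ S| + s(x); otherwise unsafe. Let D⃗ be any box chain compatible with the strip decomposition, let χ = |R ∩ F|, χ^{in} = |D⃗^∪ ∩ F|, and let S be the set of safe indices x with F(x) ∈ D⃗^∪. Then χ^{in} ≤ (1 − μ)·χ + μ·|S|. -/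

import Mathlib

open Finset

open Finset

private lemma lemR (μ : ℝ) (hμ0 : 0 < μ) (hμ1 : μ < 1) :
    ∀ n (U O : Finset ℕ), U.card ≤ n →
      (∀ x ∈ U, ∃ v, x < v ∧
        μ * ((U.filter (fun y => x < y ∧ y ≤ v)).card : ℝ) + 1
          ≤ (1 - μ) * ((O.filter (fun o => x < o ∧ o ≤ v)).card : ℝ)) →
      μ * U.card ≤ (1 - μ) * O.card := by
  classical
  intro n
  induction n with
  | zero =>
    intro U O hU _
    have hUe : U = ∅ := card_eq_zero.mp (Nat.le_zero.mp hU)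
    subst hUe
    simp only [card_empty, Nat.cast_zero, mul_zero]
    exact mul_nonneg (by linarith) (Nat.cast_nonneg _)
  | succ n ih =>
    intro U O hU hyp
    rcases U.eq_empty_or_nonempty with rfl | hne
    · simp only [card_empty, Nat.cast_zero, mul_zero]
      exact mul_nonneg (by linarith) (Nat.cast_nonneg _)
    · obtain ⟨v, hxv, hkey⟩ := hyp (U.min' hne) (U.min'_mem hne)
      have hU2card : (U.filter (fun y => v < y)).card ≤ n := by
        have hsub : U.filter (fun y => v < y) ⊆ U.erase (U.min' hne) := by
          intro y hy
          rw [mem_filter] at hy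
          refine mem_erase.mpr ⟨?_, hy.1⟩
          have := hy.2
          omega
        have h1 := card_le_card hsub
        have h2 : (U.erase (U.min' hne)).card = U.card - 1 :=
          card_erase_of_mem (U.min'_mem hne)
        have h3 : 0 < U.card := card_pos.mpr hne
        omega
      have ihres : μ * ((U.filter (fun y => v < y)).card : ℝ)
          ≤ (1 - μ) * ((O.filter (fun o => v < o)).card : ℝ) := by
        apply ih _ _ hU2card
        intro x' hx'
        rw [mem_filter] at hx'
        obtain ⟨hx'U, hvx'⟩ := hx'
        obtain ⟨v', hv', hb⟩ := hyp x' hx'U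
        refine ⟨v', hv', ?_⟩
        have e1 : (U.filter (fun y => v < y)).filter (fun y => x' < y ∧ y ≤ v')
            ⊆ U.filter (fun y => x' < y ∧ y ≤ v') :=
          filter_subset_filter _ (filter_subset _ _)
        have e2 : O.filter (fun o => x' < o ∧ o ≤ v')
            ⊆ (O.filter (fun o => v < o)).filter (fun o => x' < o ∧ o ≤ v') := by
          intro o ho
          rw [mem_filter] at ho ⊢
          refine ⟨mem_filter.mpr ⟨ho.1, ?_⟩, ho.2⟩
          have := ho.2.1
          omega
        have c1 : ((((U.filter (fun y => v < y)).filter (fun y => x' < y ∧ y ≤ v')).card : ℝ))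
            ≤ ((U.filter (fun y => x' < y ∧ y ≤ v')).card : ℝ) := by
          exact_mod_cast card_le_card e1
        have c2 : ((O.filter (fun o => x' < o ∧ o ≤ v')).card : ℝ)
            ≤ (((O.filter (fun o => v < o)).filter (fun o => x' < o ∧ o ≤ v')).card : ℝ) := by
          exact_mod_cast card_le_card e2
        have m1 : μ * ((((U.filter (fun y => v < y)).filter (fun y => x' < y ∧ y ≤ v')).card : ℝ))
            ≤ μ * ((U.filter (fun y => x' < y ∧ y ≤ v')).card : ℝ) :=
          mul_le_mul_of_nonneg_left c1 hμ0.le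
        have m2 : (1 - μ) * ((O.filter (fun o => x' < o ∧ o ≤ v')).card : ℝ)
            ≤ (1 - μ) * (((O.filter (fun o => v < o)).filter (fun o => x' < o ∧ o ≤ v')).card : ℝ) :=
          mul_le_mul_of_nonneg_left c2 (by linarith)
        linarith
      have hdrop : μ * ((U.filter (fun y => ¬ v < y)).card : ℝ)
          ≤ (1 - μ) * ((O.filter (fun o => ¬ v < o)).card : ℝ) := by
        have hsub : U.filter (fun y => ¬ v < y)
            ⊆ insert (U.min' hne) (U.filter (fun y => U.min' hne < y ∧ y ≤ v)) := by
          intro y hy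
          rw [mem_filter] at hy
          rcases eq_or_lt_of_le (U.min'_le y hy.1) with hxy | hxy
          · exact mem_insert.mpr (Or.inl hxy.symm)
          · refine mem_insert.mpr (Or.inr (mem_filter.mpr ⟨hy.1, hxy, ?_⟩))
            have := hy.2
            omega
        have h1 : (U.filter (fun y => ¬ v < y)).card
            ≤ (U.filter (fun y => U.min' hne < y ∧ y ≤ v)).card + 1 := by
          have := card_le_card hsub
          have h2 := card_insert_le (U.min' hne) (U.filter (fun y => U.min' hne < y ∧ y ≤ v))
          omega
        have h2 : O.filter (fun o => U.min' hne < o ∧ o ≤ v) ⊆ O.filter (fun o => ¬ v < o) := by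
          intro o ho
          rw [mem_filter] at ho ⊢
          refine ⟨ho.1, ?_⟩
          have := ho.2.2
          omega
        have c1 : ((U.filter (fun y => ¬ v < y)).card : ℝ)
            ≤ ((U.filter (fun y => U.min' hne < y ∧ y ≤ v)).card : ℝ) + 1 := by
          exact_mod_cast h1
        have c2 : ((O.filter (fun o => U.min' hne < o ∧ o ≤ v)).card : ℝ)
            ≤ ((O.filter (fun o => ¬ v < o)).card : ℝ) := by
          exact_mod_cast card_le_card h2
        have m1 : μ * ((U.filter (fun y => ¬ v < y)).card : ℝ)
            ≤ μ * (((U.filter (fun y => U.min' hne < y ∧ y ≤ v)).card : ℝ) + 1) :=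
          mul_le_mul_of_nonneg_left c1 hμ0.le
        have m2 : (1 - μ) * ((O.filter (fun o => U.min' hne < o ∧ o ≤ v)).card : ℝ)
            ≤ (1 - μ) * ((O.filter (fun o => ¬ v < o)).card : ℝ) :=
          mul_le_mul_of_nonneg_left c2 (by linarith)
        nlinarith [hkey]
      have hUsplit : U.card = (U.filter (fun y => v < y)).card
          + (U.filter (fun y => ¬ v < y)).card :=
        (card_filter_add_card_filter_not (p := fun y => v < y)).symm
      have hOsplit : O.card = (O.filter (fun o => v < o)).card
          + (O.filter (fun o => ¬ v < o)).card :=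
        (card_filter_add_card_filter_not (p := fun o => v < o)).symm
      calc μ * (U.card : ℝ)
          = μ * ((U.filter (fun y => v < y)).card : ℝ)
            + μ * ((U.filter (fun y => ¬ v < y)).card : ℝ) := by
            rw [hUsplit]; push_cast; ring
        _ ≤ (1 - μ) * ((O.filter (fun o => v < o)).card : ℝ)
            + (1 - μ) * ((O.filter (fun o => ¬ v < o)).card : ℝ) := by linarith
        _ = (1 - μ) * (O.card : ℝ) := by rw [hOsplit]; push_cast; ring

private lemma lemL (μ : ℝ) (hμ0 : 0 < μ) (hμ1 : μ < 1) :
    ∀ n (U O : Finset ℕ), U.card ≤ n →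
      (∀ x ∈ U, ∃ u, u < x ∧
        μ * ((U.filter (fun y => u < y ∧ y < x)).card : ℝ) + 1
          ≤ (1 - μ) * ((O.filter (fun o => u < o ∧ o < x)).card : ℝ)) →
      μ * U.card ≤ (1 - μ) * O.card := by
  classical
  intro n
  induction n with
  | zero =>
    intro U O hU _
    have hUe : U = ∅ := card_eq_zero.mp (Nat.le_zero.mp hU)
    subst hUe
    simp only [card_empty, Nat.cast_zero, mul_zero]
    exact mul_nonneg (by linarith) (Nat.cast_nonneg _)
  | succ n ih =>
    intro U O hU hyp
    rcases U.eq_empty_or_nonempty with rfl | hne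
    · simp only [card_empty, Nat.cast_zero, mul_zero]
      exact mul_nonneg (by linarith) (Nat.cast_nonneg _)
    · obtain ⟨u, hxu, hkey⟩ := hyp (U.max' hne) (U.max'_mem hne)
      have hU2card : (U.filter (fun y => y ≤ u)).card ≤ n := by
        have hsub : U.filter (fun y => y ≤ u) ⊆ U.erase (U.max' hne) := by
          intro y hy
          rw [mem_filter] at hy
          refine mem_erase.mpr ⟨?_, hy.1⟩
          have := hy.2
          omega
        have h1 := card_le_card hsub
        have h2 : (U.erase (U.max' hne)).card = U.card - 1 :=
          card_erase_of_mem (U.max'_mem hne)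
        have h3 : 0 < U.card := card_pos.mpr hne
        omega
      have ihres : μ * ((U.filter (fun y => y ≤ u)).card : ℝ)
          ≤ (1 - μ) * ((O.filter (fun o => o ≤ u)).card : ℝ) := by
        apply ih _ _ hU2card
        intro x' hx'
        rw [mem_filter] at hx'
        obtain ⟨hx'U, hx'u⟩ := hx'
        obtain ⟨u', hu', hb⟩ := hyp x' hx'U
        refine ⟨u', hu', ?_⟩
        have e1 : (U.filter (fun y => y ≤ u)).filter (fun y => u' < y ∧ y < x')
            ⊆ U.filter (fun y => u' < y ∧ y < x') :=
          filter_subset_filter _ (filter_subset _ _)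
        have e2 : O.filter (fun o => u' < o ∧ o < x')
            ⊆ (O.filter (fun o => o ≤ u)).filter (fun o => u' < o ∧ o < x') := by
          intro o ho
          rw [mem_filter] at ho ⊢
          refine ⟨mem_filter.mpr ⟨ho.1, ?_⟩, ho.2⟩
          have := ho.2.2
          omega
        have c1 : ((((U.filter (fun y => y ≤ u)).filter (fun y => u' < y ∧ y < x')).card : ℝ))
            ≤ ((U.filter (fun y => u' < y ∧ y < x')).card : ℝ) := by
          exact_mod_cast card_le_card e1
        have c2 : ((O.filter (fun o => u' < o ∧ o < x')).card : ℝ)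
            ≤ (((O.filter (fun o => o ≤ u)).filter (fun o => u' < o ∧ o < x')).card : ℝ) := by
          exact_mod_cast card_le_card e2
        have m1 : μ * ((((U.filter (fun y => y ≤ u)).filter (fun y => u' < y ∧ y < x')).card : ℝ))
            ≤ μ * ((U.filter (fun y => u' < y ∧ y < x')).card : ℝ) :=
          mul_le_mul_of_nonneg_left c1 hμ0.le
        have m2 : (1 - μ) * ((O.filter (fun o => u' < o ∧ o < x')).card : ℝ)
            ≤ (1 - μ) * (((O.filter (fun o => o ≤ u)).filter (fun o => u' < o ∧ o < x')).card : ℝ) :=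
          mul_le_mul_of_nonneg_left c2 (by linarith)
        linarith
      have hdrop : μ * ((U.filter (fun y => ¬ y ≤ u)).card : ℝ)
          ≤ (1 - μ) * ((O.filter (fun o => ¬ o ≤ u)).card : ℝ) := by
        have hsub : U.filter (fun y => ¬ y ≤ u)
            ⊆ insert (U.max' hne) (U.filter (fun y => u < y ∧ y < U.max' hne)) := by
          intro y hy
          rw [mem_filter] at hy
          rcases eq_or_lt_of_le (U.le_max' y hy.1) with hxy | hxy
          · exact mem_insert.mpr (Or.inl hxy)
          · refine mem_insert.mpr (Or.inr (mem_filter.mpr ⟨hy.1, ?_, hxy⟩))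
            have := hy.2
            omega
        have h1 : (U.filter (fun y => ¬ y ≤ u)).card
            ≤ (U.filter (fun y => u < y ∧ y < U.max' hne)).card + 1 := by
          have := card_le_card hsub
          have h2 := card_insert_le (U.max' hne) (U.filter (fun y => u < y ∧ y < U.max' hne))
          omega
        have h2 : O.filter (fun o => u < o ∧ o < U.max' hne) ⊆ O.filter (fun o => ¬ o ≤ u) := by
          intro o ho
          rw [mem_filter] at ho ⊢
          refine ⟨ho.1, ?_⟩
          have := ho.2.1
          omega
        have c1 : ((U.filter (fun y => ¬ y ≤ u)).card : ℝ)
            ≤ ((U.filter (fun y => u < y ∧ y < U.max' hne)).card : ℝ) + 1 := by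
          exact_mod_cast h1
        have c2 : ((O.filter (fun o => u < o ∧ o < U.max' hne)).card : ℝ)
            ≤ ((O.filter (fun o => ¬ o ≤ u)).card : ℝ) := by
          exact_mod_cast card_le_card h2
        have m1 : μ * ((U.filter (fun y => ¬ y ≤ u)).card : ℝ)
            ≤ μ * (((U.filter (fun y => u < y ∧ y < U.max' hne)).card : ℝ) + 1) :=
          mul_le_mul_of_nonneg_left c1 hμ0.le
        have m2 : (1 - μ) * ((O.filter (fun o => u < o ∧ o < U.max' hne)).card : ℝ)
            ≤ (1 - μ) * ((O.filter (fun o => ¬ o ≤ u)).card : ℝ) :=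
          mul_le_mul_of_nonneg_left c2 (by linarith)
        nlinarith [hkey]
      have hUsplit : U.card = (U.filter (fun y => y ≤ u)).card
          + (U.filter (fun y => ¬ y ≤ u)).card :=
        (card_filter_add_card_filter_not (p := fun y => y ≤ u)).symm
      have hOsplit : O.card = (O.filter (fun o => o ≤ u)).card
          + (O.filter (fun o => ¬ o ≤ u)).card :=
        (card_filter_add_card_filter_not (p := fun o => o ≤ u)).symm
      calc μ * (U.card : ℝ)
          = μ * ((U.filter (fun y => y ≤ u)).card : ℝ)
            + μ * ((U.filter (fun y => ¬ y ≤ u)).card : ℝ) := by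
            rw [hUsplit]; push_cast; ring
        _ ≤ (1 - μ) * ((O.filter (fun o => o ≤ u)).card : ℝ)
            + (1 - μ) * ((O.filter (fun o => ¬ o ≤ u)).card : ℝ) := by linarith
        _ = (1 - μ) * (O.card : ℝ) := by rw [hOsplit]; push_cast; ring

/-- Dichotomy lemma, corollary form.  `R` is the box with index interval `(a,b]` and
value interval `[c,d]`; the strip decomposition is given by `z 0 = a < z 1 < ⋯ < z m = b`;
`f` is the array, `F(x) = (x, f x)`; `sw x` is the width of the strip containing `x`;
`safe x` says every substrip of `R` adjacent to `x` contains at most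
`μ·|F ∩ S| + sw x` points of `F` incomparable with `F(x)`; `inD x` says `F(x)` lies in
the compatible box chain determined by the nondecreasing heights `h i` (box `i` being
`(z i, z (i+1)] × [h i, h (i+1)]`).  Then `χ^in ≤ (1-μ)·χ + μ·|S|`. -/
theorem stmt4 (a b c d : ℕ) (hab : a < b) (hcd : c ≤ d)
    (f : ℕ → ℕ) (μ : ℝ) (hμ0 : 0 < μ) (hμ1 : μ < 1)
    (m : ℕ) (hm : 0 < m) (z h : ℕ → ℕ)
    (hz0 : z 0 = a) (hzm : z m = b) (hzmono : ∀ i < m, z i < z (i + 1))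
    (hhcb : ∀ i ≤ m, c ≤ h i ∧ h i ≤ d) (hhmono : ∀ i < m, h i ≤ h (i + 1))
    (sw : ℕ → ℕ)
    (hsw : ∀ i < m, ∀ x, z i < x → x ≤ z (i + 1) → sw x = z (i + 1) - z i)
    (safe : ℕ → Prop)
    (hsafe : ∀ x, a < x → x ≤ b → (safe x ↔
      ∀ u v : ℕ, a ≤ u → v ≤ b → u < v → (u = x ∨ v = x - 1) →
        (({y : ℕ | u < y ∧ y ≤ v ∧ c ≤ f y ∧ f y ≤ d ∧
            ¬ ((y, f y) : ℕ × ℕ) ≤ (x, f x) ∧ ¬ ((x, f x) : ℕ × ℕ) ≤ (y, f y)}.ncard : ℝ)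
          ≤ μ * ({y : ℕ | u < y ∧ y ≤ v ∧ c ≤ f y ∧ f y ≤ d}.ncard : ℝ) + (sw x : ℝ))))
    (inD : ℕ → Prop)
    (hinD : ∀ x, inD x ↔
      ∃ i < m, z i < x ∧ x ≤ z (i + 1) ∧ h i ≤ f x ∧ f x ≤ h (i + 1)) :
    ({x : ℕ | a < x ∧ x ≤ b ∧ inD x}.ncard : ℝ)
      ≤ (1 - μ) * ({x : ℕ | a < x ∧ x ≤ b ∧ c ≤ f x ∧ f x ≤ d}.ncard : ℝ)
        + μ * ({x : ℕ | a < x ∧ x ≤ b ∧ inD x ∧ safe x}.ncard : ℝ) := by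
  classical
  -- monotonicity of z and h
  have zmono : ∀ j, j ≤ m → ∀ i, i ≤ j → z i ≤ z j := by
    intro j
    induction j with
    | zero =>
      intro _ i hi
      have : i = 0 := by omega
      subst this; exact le_rfl
    | succ j ih =>
      intro hj i hi
      rcases Nat.eq_or_lt_of_le hi with h1 | h1
      · exact le_of_eq (by rw [h1])
      · have h2 : z i ≤ z j := ih (by omega) i (by omega)
        have h3 : z j < z (j + 1) := hzmono j (by omega)
        omega
  have hmono2 : ∀ j, j ≤ m → ∀ i, i ≤ j → h i ≤ h j := by
    intro j
    induction j with
    | zero =>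
      intro _ i hi
      have : i = 0 := by omega
      subst this; exact le_rfl
    | succ j ih =>
      intro hj i hi
      rcases Nat.eq_or_lt_of_le hi with h1 | h1
      · exact le_of_eq (by rw [h1])
      · have h2 : h i ≤ h j := ih (by omega) i (by omega)
        have h3 : h j ≤ h (j + 1) := hhmono j (by omega)
        omega
  -- membership facts for inD
  have inDfacts : ∀ x, inD x → (a < x ∧ x ≤ b) ∧ c ≤ f x ∧ f x ≤ d := by
    intro x hx
    obtain ⟨i, him, h1, h2, h3, h4⟩ := (hinD x).mp hx
    have ha0 : z 0 ≤ z i := zmono i (le_of_lt him) 0 (Nat.zero_le _)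
    have hb2 : z (i + 1) ≤ z m := zmono m le_rfl (i + 1) him
    have hc2 : c ≤ h i := (hhcb i (le_of_lt him)).1
    have hd2 : h (i + 1) ≤ d := (hhcb (i + 1) him).2
    exact ⟨⟨by omega, by omega⟩, by omega, by omega⟩
  -- ncard to Finset.card
  have hncard : ∀ (u v : ℕ) (p : ℕ → Prop),
      {y : ℕ | u < y ∧ y ≤ v ∧ p y}.ncard = ((Finset.Ioc u v).filter p).card := by
    intro u v p
    have he : {y : ℕ | u < y ∧ y ≤ v ∧ p y} = ↑((Finset.Ioc u v).filter p) := by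
      ext y
      simp [Finset.mem_Ioc, and_assoc]
    rw [he, Set.ncard_coe_finset]
  -- named finsets
  set C := (Finset.Ioc a b).filter (fun x => inD x) with hC
  set Fb := (Finset.Ioc a b).filter (fun x => c ≤ f x ∧ f x ≤ d) with hFbdef
  set Sf := (Finset.Ioc a b).filter (fun x => inD x ∧ safe x) with hSf
  set Uf := (Finset.Ioc a b).filter (fun x => inD x ∧ ¬ safe x) with hUf
  set Of := (Finset.Ioc a b).filter (fun x => (c ≤ f x ∧ f x ≤ d) ∧ ¬ inD x) with hOf
  set OR := Of.filter (fun o => ∃ j, j ≤ m ∧ z j < o ∧ f o < h j) with hORdef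
  set OL := Of.filter (fun o => ∃ j, j ≤ m ∧ o ≤ z j ∧ h j < f o) with hOLdef
  -- card splits
  have hCS : C.card = Sf.card + Uf.card := by
    have e1 : Sf = C.filter (fun x => safe x) := by
      rw [hSf, hC]
      ext y
      simp only [mem_filter, mem_Ioc]
      tauto
    have e2 : Uf = C.filter (fun x => ¬ safe x) := by
      rw [hUf, hC]
      ext y
      simp only [mem_filter, mem_Ioc]
      tauto
    rw [e1, e2, card_filter_add_card_filter_not]
  have hFC : Fb.card = C.card + Of.card := by
    have e1 : C = Fb.filter (fun x => inD x) := by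
      rw [hC, hFbdef]
      ext y
      simp only [mem_filter, mem_Ioc]
      constructor
      · rintro ⟨h1, h2⟩
        exact ⟨⟨h1, (inDfacts y h2).2⟩, h2⟩
      · rintro ⟨⟨h1, _⟩, h3⟩
        exact ⟨h1, h3⟩
    have e2 : Of = Fb.filter (fun x => ¬ inD x) := by
      rw [hOf, hFbdef]
      ext y
      simp only [mem_filter, mem_Ioc]
      tauto
    rw [e1, e2]
    exact (card_filter_add_card_filter_not (p := fun x => inD x)).symm
  have hUfC : Uf ⊆ C := by
    intro y hy
    rw [hUf, mem_filter] at hy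
    rw [hC, mem_filter]
    exact ⟨hy.1, hy.2.1⟩
  -- the key dichotomy for unsafe points
  have key : ∀ x ∈ Uf,
      (∃ v, x < v ∧ μ * ((C.filter (fun y => x < y ∧ y ≤ v)).card : ℝ) + 1
          ≤ (1 - μ) * ((OR.filter (fun o => x < o ∧ o ≤ v)).card : ℝ))
      ∨ (∃ u, u < x ∧ μ * ((C.filter (fun y => u < y ∧ y < x)).card : ℝ) + 1
          ≤ (1 - μ) * ((OL.filter (fun o => u < o ∧ o < x)).card : ℝ)) := by
    intro x hx
    rw [hUf, mem_filter, mem_Ioc] at hx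
    obtain ⟨⟨hax, hxb⟩, hinDx, hnsafe⟩ := hx
    obtain ⟨i, him, hzx, hxz, hhf1, hhf2⟩ := (hinD x).mp hinDx
    rw [hsafe x hax hxb] at hnsafe
    push_neg at hnsafe
    obtain ⟨u, v, hau, hvb, huv, hcase, hgt⟩ := hnsafe
    rw [hncard, hncard] at hgt
    rw [Finset.filter_congr_decidable] at hgt
    have hswx : sw x = z (i + 1) - z i := hsw i him x hzx hxz
    rcases hcase with hcu | hcv
    · -- right witness : u = x
      subst hcu
      left
      refine ⟨v, huv, ?_⟩
      have hgt2 : μ * (((Finset.Ioc u v).filter (fun y => c ≤ f y ∧ f y ≤ d)).card : ℝ)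
            + (sw u : ℝ)
          < (((Finset.Ioc u v).filter (fun y => c ≤ f y ∧ f y ≤ d ∧
            ¬ ((y, f y) : ℕ × ℕ) ≤ (u, f u) ∧ ¬ ((u, f u) : ℕ × ℕ) ≤ (y, f y))).card : ℝ) := by
        convert hgt using 4
        all_goals rfl
      have hVsub : (Finset.Ioc u v).filter (fun y => c ≤ f y ∧ f y ≤ d ∧
            ¬ ((y, f y) : ℕ × ℕ) ≤ (u, f u) ∧ ¬ ((u, f u) : ℕ × ℕ) ≤ (y, f y))
          ⊆ (Finset.Ioc u (z (i + 1))) ∪ (OR.filter (fun o => u < o ∧ o ≤ v)) := by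
        intro y hy
        rw [mem_filter, mem_Ioc] at hy
        obtain ⟨⟨hxy, hyv⟩, hcy, hyd, hn1, hn2⟩ := hy
        have hfy : f y < f u := by
          by_contra hcon
          push_neg at hcon
          exact hn2 (Prod.mk_le_mk.mpr ⟨le_of_lt hxy, hcon⟩)
        rw [mem_union]
        by_cases hyz : y ≤ z (i + 1)
        · exact Or.inl (mem_Ioc.mpr ⟨hxy, hyz⟩)
        · push_neg at hyz
          right
          rw [mem_filter]
          refine ⟨?_, hxy, hyv⟩
          rw [hORdef, mem_filter]
          constructor
          · rw [hOf, mem_filter, mem_Ioc]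
            refine ⟨⟨by omega, by omega⟩, ⟨hcy, hyd⟩, ?_⟩
            intro hinDy
            obtain ⟨j, hjm, hzj, hzj1, hf1, hf2⟩ := (hinD y).mp hinDy
            have hij : i + 1 ≤ j := by
              by_contra hc2
              push_neg at hc2
              have : z (j + 1) ≤ z (i + 1) := zmono (i + 1) (by omega) (j + 1) (by omega)
              omega
            have : h (i + 1) ≤ h j := hmono2 j (le_of_lt hjm) (i + 1) hij
            omega
          · exact ⟨i + 1, by omega, hyz, by omega⟩
      have hVcard : ((Finset.Ioc u v).filter (fun y => c ≤ f y ∧ f y ≤ d ∧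
            ¬ ((y, f y) : ℕ × ℕ) ≤ (u, f u) ∧ ¬ ((u, f u) : ℕ × ℕ) ≤ (y, f y))).card + 1
          ≤ sw u + (OR.filter (fun o => u < o ∧ o ≤ v)).card := by
        have h1 := card_le_card hVsub
        have h2 := card_union_le (Finset.Ioc u (z (i + 1))) (OR.filter (fun o => u < o ∧ o ≤ v))
        have h3 : (Finset.Ioc u (z (i + 1))).card = z (i + 1) - u := Nat.card_Ioc u (z (i + 1))
        omega
      have hFsub : (C.filter (fun y => u < y ∧ y ≤ v)) ∪ (OR.filter (fun o => u < o ∧ o ≤ v))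
          ⊆ (Finset.Ioc u v).filter (fun y => c ≤ f y ∧ f y ≤ d) := by
        intro y hy
        rw [mem_union] at hy
        rw [mem_filter, mem_Ioc]
        rcases hy with hy | hy
        · rw [mem_filter] at hy
          obtain ⟨hyC, hxy, hyv⟩ := hy
          rw [hC, mem_filter] at hyC
          exact ⟨⟨hxy, hyv⟩, (inDfacts y hyC.2).2⟩
        · rw [mem_filter] at hy
          obtain ⟨hyOR, hxy, hyv⟩ := hy
          rw [hORdef, mem_filter] at hyOR
          have h6 := hyOR.1
          rw [hOf, mem_filter] at h6
          exact ⟨⟨hxy, hyv⟩, h6.2.1⟩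
      have hFdisj : Disjoint (C.filter (fun y => u < y ∧ y ≤ v))
          (OR.filter (fun o => u < o ∧ o ≤ v)) := by
        rw [disjoint_left]
        intro t ht1 ht2
        rw [mem_filter, hC, mem_filter] at ht1
        rw [mem_filter, hORdef, mem_filter, hOf, mem_filter] at ht2
        exact ht2.1.1.2.2 ht1.1.2
      have hFcard : (C.filter (fun y => u < y ∧ y ≤ v)).card
            + (OR.filter (fun o => u < o ∧ o ≤ v)).card
          ≤ ((Finset.Ioc u v).filter (fun y => c ≤ f y ∧ f y ≤ d)).card := by
        rw [← card_union_of_disjoint hFdisj]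
        exact card_le_card hFsub
      have hc : ((C.filter (fun y => u < y ∧ y ≤ v)).card : ℝ)
            + ((OR.filter (fun o => u < o ∧ o ≤ v)).card : ℝ)
          ≤ (((Finset.Ioc u v).filter (fun y => c ≤ f y ∧ f y ≤ d)).card : ℝ) := by
        exact_mod_cast hFcard
      have h5 : μ * ((C.filter (fun y => u < y ∧ y ≤ v)).card : ℝ)
            + μ * ((OR.filter (fun o => u < o ∧ o ≤ v)).card : ℝ)
          ≤ μ * (((Finset.Ioc u v).filter (fun y => c ≤ f y ∧ f y ≤ d)).card : ℝ) := by
        have h5a := mul_le_mul_of_nonneg_left hc hμ0.le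
        calc μ * ((C.filter (fun y => u < y ∧ y ≤ v)).card : ℝ)
              + μ * ((OR.filter (fun o => u < o ∧ o ≤ v)).card : ℝ)
            = μ * (((C.filter (fun y => u < y ∧ y ≤ v)).card : ℝ)
              + ((OR.filter (fun o => u < o ∧ o ≤ v)).card : ℝ)) := by ring
          _ ≤ _ := h5a
      have hVre : (((Finset.Ioc u v).filter (fun y => c ≤ f y ∧ f y ≤ d ∧
            ¬ ((y, f y) : ℕ × ℕ) ≤ (u, f u) ∧ ¬ ((u, f u) : ℕ × ℕ) ≤ (y, f y))).card : ℝ) + 1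
          ≤ (sw u : ℝ) + ((OR.filter (fun o => u < o ∧ o ≤ v)).card : ℝ) := by
        exact_mod_cast hVcard
      have e7 : (1 - μ) * ((OR.filter (fun o => u < o ∧ o ≤ v)).card : ℝ)
          = ((OR.filter (fun o => u < o ∧ o ≤ v)).card : ℝ)
            - μ * ((OR.filter (fun o => u < o ∧ o ≤ v)).card : ℝ) := by ring
      linarith [hgt2, hVre, h5, e7]
    · -- left witness : v = x - 1
      subst hcv
      right
      refine ⟨u, by omega, ?_⟩
      have hgt2 : μ * (((Finset.Ioc u (x - 1)).filter (fun y => c ≤ f y ∧ f y ≤ d)).card : ℝ)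
            + (sw x : ℝ)
          < (((Finset.Ioc u (x - 1)).filter (fun y => c ≤ f y ∧ f y ≤ d ∧
            ¬ ((y, f y) : ℕ × ℕ) ≤ (x, f x) ∧ ¬ ((x, f x) : ℕ × ℕ) ≤ (y, f y))).card : ℝ) := by
        convert hgt using 4
        all_goals rfl
      have hVsub : (Finset.Ioc u (x - 1)).filter (fun y => c ≤ f y ∧ f y ≤ d ∧
            ¬ ((y, f y) : ℕ × ℕ) ≤ (x, f x) ∧ ¬ ((x, f x) : ℕ × ℕ) ≤ (y, f y))
          ⊆ (Finset.Ioo (z i) x) ∪ (OL.filter (fun o => u < o ∧ o < x)) := by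
        intro y hy
        rw [mem_filter, mem_Ioc] at hy
        obtain ⟨⟨huy, hyx1⟩, hcy, hyd, hn1, hn2⟩ := hy
        have hyx : y < x := by omega
        have hfy : f x < f y := by
          by_contra hcon
          push_neg at hcon
          exact hn1 (Prod.mk_le_mk.mpr ⟨by omega, hcon⟩)
        rw [mem_union]
        by_cases hyz : z i < y
        · exact Or.inl (mem_Ioo.mpr ⟨hyz, hyx⟩)
        · push_neg at hyz
          right
          rw [mem_filter]
          refine ⟨?_, huy, hyx⟩
          rw [hOLdef, mem_filter]
          constructor
          · rw [hOf, mem_filter, mem_Ioc]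
            refine ⟨⟨by omega, by omega⟩, ⟨hcy, hyd⟩, ?_⟩
            intro hinDy
            obtain ⟨j, hjm, hzj, hzj1, hf1, hf2⟩ := (hinD y).mp hinDy
            have hij : j + 1 ≤ i := by
              by_contra hc2
              push_neg at hc2
              have : z i ≤ z j := zmono j (le_of_lt hjm) i (by omega)
              omega
            have : h (j + 1) ≤ h i := hmono2 i (le_of_lt him) (j + 1) hij
            omega
          · exact ⟨i, le_of_lt him, hyz, by omega⟩
      have hVcard : ((Finset.Ioc u (x - 1)).filter (fun y => c ≤ f y ∧ f y ≤ d ∧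
            ¬ ((y, f y) : ℕ × ℕ) ≤ (x, f x) ∧ ¬ ((x, f x) : ℕ × ℕ) ≤ (y, f y))).card + 1
          ≤ sw x + (OL.filter (fun o => u < o ∧ o < x)).card := by
        have h1 := card_le_card hVsub
        have h2 := card_union_le (Finset.Ioo (z i) x) (OL.filter (fun o => u < o ∧ o < x))
        have h3 : (Finset.Ioo (z i) x).card = x - z i - 1 := Nat.card_Ioo (z i) x
        omega
      have hFsub : (C.filter (fun y => u < y ∧ y < x)) ∪ (OL.filter (fun o => u < o ∧ o < x))
          ⊆ (Finset.Ioc u (x - 1)).filter (fun y => c ≤ f y ∧ f y ≤ d) := by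
        intro y hy
        rw [mem_union] at hy
        rw [mem_filter, mem_Ioc]
        rcases hy with hy | hy
        · rw [mem_filter] at hy
          obtain ⟨hyC, huy, hyx⟩ := hy
          rw [hC, mem_filter] at hyC
          exact ⟨⟨huy, by omega⟩, (inDfacts y hyC.2).2⟩
        · rw [mem_filter] at hy
          obtain ⟨hyOL, huy, hyx⟩ := hy
          rw [hOLdef, mem_filter] at hyOL
          have h6 := hyOL.1
          rw [hOf, mem_filter] at h6
          exact ⟨⟨huy, by omega⟩, h6.2.1⟩
      have hFdisj : Disjoint (C.filter (fun y => u < y ∧ y < x))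
          (OL.filter (fun o => u < o ∧ o < x)) := by
        rw [disjoint_left]
        intro t ht1 ht2
        rw [mem_filter, hC, mem_filter] at ht1
        rw [mem_filter, hOLdef, mem_filter, hOf, mem_filter] at ht2
        exact ht2.1.1.2.2 ht1.1.2
      have hFcard : (C.filter (fun y => u < y ∧ y < x)).card
            + (OL.filter (fun o => u < o ∧ o < x)).card
          ≤ ((Finset.Ioc u (x - 1)).filter (fun y => c ≤ f y ∧ f y ≤ d)).card := by
        rw [← card_union_of_disjoint hFdisj]
        exact card_le_card hFsub
      have hc : ((C.filter (fun y => u < y ∧ y < x)).card : ℝ)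
            + ((OL.filter (fun o => u < o ∧ o < x)).card : ℝ)
          ≤ (((Finset.Ioc u (x - 1)).filter (fun y => c ≤ f y ∧ f y ≤ d)).card : ℝ) := by
        exact_mod_cast hFcard
      have h5 : μ * ((C.filter (fun y => u < y ∧ y < x)).card : ℝ)
            + μ * ((OL.filter (fun o => u < o ∧ o < x)).card : ℝ)
          ≤ μ * (((Finset.Ioc u (x - 1)).filter (fun y => c ≤ f y ∧ f y ≤ d)).card : ℝ) := by
        have h5a := mul_le_mul_of_nonneg_left hc hμ0.le
        calc μ * ((C.filter (fun y => u < y ∧ y < x)).card : ℝ)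
              + μ * ((OL.filter (fun o => u < o ∧ o < x)).card : ℝ)
            = μ * (((C.filter (fun y => u < y ∧ y < x)).card : ℝ)
              + ((OL.filter (fun o => u < o ∧ o < x)).card : ℝ)) := by ring
          _ ≤ _ := h5a
      have hVre : (((Finset.Ioc u (x - 1)).filter (fun y => c ≤ f y ∧ f y ≤ d ∧
            ¬ ((y, f y) : ℕ × ℕ) ≤ (x, f x) ∧ ¬ ((x, f x) : ℕ × ℕ) ≤ (y, f y))).card : ℝ) + 1
          ≤ (sw x : ℝ) + ((OL.filter (fun o => u < o ∧ o < x)).card : ℝ) := by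
        exact_mod_cast hVcard
      have e7 : (1 - μ) * ((OL.filter (fun o => u < o ∧ o < x)).card : ℝ)
          = ((OL.filter (fun o => u < o ∧ o < x)).card : ℝ)
            - μ * ((OL.filter (fun o => u < o ∧ o < x)).card : ℝ) := by ring
      linarith [hgt2, hVre, h5, e7]
  -- split Uf into right- and left-witnessed parts
  set UR := Uf.filter (fun x => ∃ v, x < v ∧
      μ * ((C.filter (fun y => x < y ∧ y ≤ v)).card : ℝ) + 1
        ≤ (1 - μ) * ((OR.filter (fun o => x < o ∧ o ≤ v)).card : ℝ)) with hURdef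
  set UL := Uf.filter (fun x => ¬ ∃ v, x < v ∧
      μ * ((C.filter (fun y => x < y ∧ y ≤ v)).card : ℝ) + 1
        ≤ (1 - μ) * ((OR.filter (fun o => x < o ∧ o ≤ v)).card : ℝ)) with hULdef
  have hURle : μ * (UR.card : ℝ) ≤ (1 - μ) * (OR.card : ℝ) := by
    apply lemR μ hμ0 hμ1 UR.card UR OR le_rfl
    intro x hx
    have hx2 := hx
    rw [hURdef, mem_filter] at hx2
    obtain ⟨v, hv, hb2⟩ := hx2.2
    refine ⟨v, hv, ?_⟩
    have hsub : UR.filter (fun y => x < y ∧ y ≤ v) ⊆ C.filter (fun y => x < y ∧ y ≤ v) :=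
      filter_subset_filter _ ((filter_subset _ _).trans hUfC)
    have c1 : ((UR.filter (fun y => x < y ∧ y ≤ v)).card : ℝ)
        ≤ ((C.filter (fun y => x < y ∧ y ≤ v)).card : ℝ) := by
      exact_mod_cast card_le_card hsub
    nlinarith
  have hULle : μ * (UL.card : ℝ) ≤ (1 - μ) * (OL.card : ℝ) := by
    apply lemL μ hμ0 hμ1 UL.card UL OL le_rfl
    intro x hx
    have hx2 := hx
    rw [hULdef, mem_filter] at hx2
    have hGL := (key x hx2.1).resolve_left hx2.2
    obtain ⟨u, hu, hb2⟩ := hGL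
    refine ⟨u, hu, ?_⟩
    have hsub : UL.filter (fun y => u < y ∧ y < x) ⊆ C.filter (fun y => u < y ∧ y < x) :=
      filter_subset_filter _ ((filter_subset _ _).trans hUfC)
    have c1 : ((UL.filter (fun y => u < y ∧ y < x)).card : ℝ)
        ≤ ((C.filter (fun y => u < y ∧ y < x)).card : ℝ) := by
      exact_mod_cast card_le_card hsub
    nlinarith
  have hUsplit2 : Uf.card = UR.card + UL.card := by
    rw [hURdef, hULdef]
    exact (card_filter_add_card_filter_not (p := fun x => ∃ v, x < v ∧
      μ * ((C.filter (fun y => x < y ∧ y ≤ v)).card : ℝ) + 1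
        ≤ (1 - μ) * ((OR.filter (fun o => x < o ∧ o ≤ v)).card : ℝ))).symm
  have hdisj : Disjoint OR OL := by
    rw [disjoint_left]
    intro o h1 h2
    rw [hORdef, mem_filter] at h1
    rw [hOLdef, mem_filter] at h2
    obtain ⟨_, j1, hj1, hz1, hf1⟩ := h1
    obtain ⟨_, j2, hj2, hz2, hf2⟩ := h2
    have hj : j1 < j2 := by
      by_contra hcon
      push_neg at hcon
      have := zmono j1 hj1 j2 hcon
      omega
    have := hmono2 j2 hj2 j1 (le_of_lt hj)
    omega
  have hORL : OR.card + OL.card ≤ Of.card := by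
    rw [← card_union_of_disjoint hdisj]
    exact card_le_card (union_subset (filter_subset _ _) (filter_subset _ _))
  -- combine
  have hUO : μ * (Uf.card : ℝ) ≤ (1 - μ) * (Of.card : ℝ) := by
    have h3 : (1 - μ) * (((OR.card : ℝ) + (OL.card : ℝ))) ≤ (1 - μ) * (Of.card : ℝ) := by
      apply mul_le_mul_of_nonneg_left _ (by linarith)
      exact_mod_cast hORL
    have h4 : (Uf.card : ℝ) = (UR.card : ℝ) + (UL.card : ℝ) := by
      exact_mod_cast congrArg (Nat.cast : ℕ → ℝ) hUsplit2
    nlinarith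
  -- rewrite the goal
  have eg1 : {x : ℕ | a < x ∧ x ≤ b ∧ inD x} = (↑C : Set ℕ) := by
    ext y
    simp [hC, Finset.mem_Ioc, and_assoc]
  have eg2 : {x : ℕ | a < x ∧ x ≤ b ∧ c ≤ f x ∧ f x ≤ d} = (↑Fb : Set ℕ) := by
    ext y
    simp [hFbdef, Finset.mem_Ioc, and_assoc]
  have eg3 : {x : ℕ | a < x ∧ x ≤ b ∧ inD x ∧ safe x} = (↑Sf : Set ℕ) := by
    ext y
    simp [hSf, Finset.mem_Ioc, and_assoc]
  rw [eg1, eg2, eg3, Set.ncard_coe_finset, Set.ncard_coe_finset, Set.ncard_coe_finset]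
  have hg1 : (Fb.card : ℝ) = (C.card : ℝ) + (Of.card : ℝ) := by exact_mod_cast hFC
  have hg2 : (C.card : ℝ) = (Sf.card : ℝ) + (Uf.card : ℝ) := by exact_mod_cast hCS
  rw [hg1, hg2]
  nlinarith [hUO]
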